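/- Let b₁ > b₂ > 0 and μ ≥ 3. If b₁ - b₂ < c ≤ b₁ + ((μ-2)/2)·b₂, then among all graphs on μ nodes, the star graph maximizes the social welfare W(g) = Σ_j [ d_j(b₁ - c) + Σ_{w : dist(j,w) > 1} b_{dist(j,w)} ], where b_i = b₂ for all distances i ≥ 2. -/

import Mathlib

open Finset SimpleGraph
open scoped Classical

/-- Social welfare of a graph. -/
noncomputable def socialWelfare {n : ℕ} (b : ℕ → ℝ) (c : ℝ)
    (G : SimpleGraph (Fin n)) : ℝ := by
  classical
  exact ∑ j, ((G.degree j : ℝ) * (b 1 - c) +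
    ∑ w, if 1 < G.dist j w then b (G.dist j w) else 0)

/-- The star graph with center `v`. -/
def starWith {V : Type*} [DecidableEq V] (v : V) : SimpleGraph V where
  Adj x y := x ≠ y ∧ (x = v ∨ y = v)
  symm := ⟨fun x y ⟨hxy, h⟩ => ⟨hxy.symm, h.symm⟩⟩
  loopless := ⟨fun x ⟨hxx, _⟩ => hxx rfl⟩

section helpers
variable {n : ℕ}

lemma descend (G : SimpleGraph (Fin n)) {j w : Fin n} (h : 1 < G.dist w j) :
    ∃ x, G.Adj w x ∧ G.dist w j = G.dist x j + 1 := by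
  have h0 : G.dist w j ≠ 0 := by omega
  obtain ⟨p, hp⟩ := SimpleGraph.exists_walk_of_dist_ne_zero h0
  cases p with
  | nil => simp [SimpleGraph.dist_self] at h
  | @cons _ x _ hadj q =>
    refine ⟨x, hadj, ?_⟩
    have h1 : G.dist x j ≤ q.length := SimpleGraph.dist_le q
    obtain ⟨r, hr⟩ := SimpleGraph.Reachable.exists_walk_length_eq_dist (⟨q⟩ : G.Reachable x j)
    have h2 : G.dist w j ≤ r.length + 1 := by
      simpa using SimpleGraph.dist_le (SimpleGraph.Walk.cons hadj r)
    simp only [SimpleGraph.Walk.length_cons] at hp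
    omega

noncomputable def stepv (G : SimpleGraph (Fin n)) (j w : Fin n) : Fin n :=
  if h : 1 < G.dist w j then Classical.choose (descend G h) else w

lemma stepv_spec (G : SimpleGraph (Fin n)) {j w : Fin n} (h : 1 < G.dist w j) :
    G.Adj w (stepv G j w) ∧ G.dist w j = G.dist (stepv G j w) j + 1 := by
  rw [stepv, dif_pos h]; exact Classical.choose_spec (descend G h)

lemma count_add_degree_le (G : SimpleGraph (Fin n)) (j : Fin n) :
    #(univ.filter fun w => 1 < G.dist j w) + G.degree j ≤ #G.edgeFinset := by
  have hsub : #(univ.filter fun w => 1 < G.dist j w)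
      ≤ #(G.edgeFinset.filter fun e => j ∉ e) := by
    apply Finset.card_le_card_of_injOn (fun w => s(w, stepv G j w))
    · intro w hw
      simp only [mem_coe, mem_filter, mem_univ, true_and] at hw
      have hw' : 1 < G.dist w j := by rwa [SimpleGraph.dist_comm] at hw
      obtain ⟨hadj, hd⟩ := stepv_spec G hw'
      simp only [mem_coe, mem_filter, SimpleGraph.mem_edgeFinset, SimpleGraph.mem_edgeSet, Sym2.mem_iff]
      refine ⟨hadj, ?_⟩
      push_neg
      constructor
      · rintro rfl
        simp [SimpleGraph.dist_self] at hw'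
      · intro hjx
        have hone : G.dist w j = 1 := by rw [hd, ← hjx, SimpleGraph.dist_self]
        omega
    · intro w hw w' hw' heq
      simp only [coe_filter, Set.mem_setOf_eq, mem_univ, true_and] at hw hw'
      have h1 : 1 < G.dist w j := by rwa [SimpleGraph.dist_comm] at hw
      have h2 : 1 < G.dist w' j := by rwa [SimpleGraph.dist_comm] at hw'
      obtain ⟨_, hd1⟩ := stepv_spec G h1
      obtain ⟨_, hd2⟩ := stepv_spec G h2
      rw [Sym2.eq_iff] at heq
      rcases heq with ⟨rfl, -⟩ | ⟨hA, hB⟩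
      · rfl
      · exfalso
        have e1 : G.dist w j = G.dist w' j + 1 := by rw [hd1, hB]
        have e2 : G.dist w' j = G.dist w j + 1 := by rw [hd2, ← hA]
        omega
  have hsplit : #(G.edgeFinset.filter fun e => j ∈ e)
      + #(G.edgeFinset.filter fun e => j ∉ e) = #G.edgeFinset :=
    Finset.card_filter_add_card_filter_not _
  have hinc : #(G.edgeFinset.filter fun e => j ∈ e) = G.degree j := by
    rw [← SimpleGraph.incidenceFinset_eq_filter, SimpleGraph.card_incidenceFinset_eq_degree]
  omega

lemma count_add_degree_add_one_le (G : SimpleGraph (Fin n)) (j : Fin n) :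
    #(univ.filter fun w => 1 < G.dist j w) + G.degree j + 1 ≤ n := by
  have hdisj1 : Disjoint (univ.filter fun w => 1 < G.dist j w) (G.neighborFinset j) := by
    rw [Finset.disjoint_left]
    intro w hw hw'
    simp only [mem_filter, mem_univ, true_and] at hw
    rw [SimpleGraph.mem_neighborFinset] at hw'
    have := SimpleGraph.dist_eq_one_iff_adj.mpr hw'
    omega
  have hdisj2 : Disjoint ((univ.filter fun w => 1 < G.dist j w) ∪ G.neighborFinset j) {j} := by
    rw [Finset.disjoint_right]
    intro w hw
    simp only [mem_singleton] at hw
    subst hw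
    simp only [mem_union, mem_filter, mem_univ, true_and, SimpleGraph.mem_neighborFinset]
    push_neg
    exact ⟨by simp [SimpleGraph.dist_self], G.irrefl⟩
  have hsub : ((univ.filter fun w => 1 < G.dist j w) ∪ G.neighborFinset j) ∪ {j}
      ⊆ (univ : Finset (Fin n)) := Finset.subset_univ _
  have := Finset.card_le_card hsub
  rw [Finset.card_union_of_disjoint hdisj2, Finset.card_union_of_disjoint hdisj1,
    Finset.card_singleton, Finset.card_univ, Fintype.card_fin] at this
  have hd : G.degree j = #(G.neighborFinset j) := rfl
  omega


lemma welfare_eq (b : ℕ → ℝ) (c : ℝ) (hb : ∀ i, 2 ≤ i → b i = b 2)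
    (G : SimpleGraph (Fin n)) :
    socialWelfare b c G = ((∑ j, G.degree j : ℕ) : ℝ) * (b 1 - c)
      + ((∑ j, #(univ.filter fun w => 1 < G.dist j w) : ℕ) : ℝ) * b 2 := by
  unfold socialWelfare
  rw [Finset.sum_add_distrib]
  push_cast
  have hterm : ∀ j : Fin n, (∑ w, if 1 < G.dist j w then b (G.dist j w) else 0)
      = (#(univ.filter fun w => 1 < G.dist j w) : ℝ) * b 2 := by
    intro j
    have h1 : (∑ w, if 1 < G.dist j w then b (G.dist j w) else 0)
        = ∑ w ∈ univ.filter (fun w => 1 < G.dist j w), b 2 := by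
      rw [Finset.sum_filter]
      apply Finset.sum_congr rfl
      intro w _
      by_cases h : 1 < G.dist j w
      · simp only [if_pos h]
        exact hb _ (by omega)
      · simp only [if_neg h]
    rw [h1, Finset.sum_const, nsmul_eq_mul]
  congr 1
  · rw [Finset.sum_mul]
  · rw [Finset.sum_congr rfl (fun j _ => hterm j), ← Finset.sum_mul]

lemma star_dist_gt_one (v j w : Fin n) :
    1 < (starWith v).dist j w ↔ (j ≠ w ∧ j ≠ v ∧ w ≠ v) := by
  constructor
  · intro h
    have hne : j ≠ w := by
      rintro rfl; simp [SimpleGraph.dist_self] at h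
    have hnadj : ¬ (starWith v).Adj j w := by
      intro ha
      have := SimpleGraph.dist_eq_one_iff_adj.mpr ha
      omega
    refine ⟨hne, ?_, ?_⟩
    · rintro rfl; exact hnadj ⟨hne, Or.inl rfl⟩
    · rintro rfl; exact hnadj ⟨hne, Or.inr rfl⟩
  · rintro ⟨hjw, hjv, hwv⟩
    have hnadj : ¬ (starWith v).Adj j w := by
      rintro ⟨-, h | h⟩
      · exact hjv h
      · exact hwv h
    have hreach : (starWith v).Reachable j w :=
      ⟨SimpleGraph.Walk.cons (show (starWith v).Adj j v from ⟨hjv, Or.inr rfl⟩)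
        (SimpleGraph.Walk.cons (show (starWith v).Adj v w from ⟨Ne.symm hwv, Or.inl rfl⟩)
          SimpleGraph.Walk.nil)⟩
    have h0 : 0 < (starWith v).dist j w := hreach.pos_dist_of_ne hjw
    have h1 : (starWith v).dist j w ≠ 1 := by
      intro h; exact hnadj (SimpleGraph.dist_eq_one_iff_adj.mp h)
    omega

lemma star_degree (v j : Fin n) :
    (starWith v).degree j = if j = v then n - 1 else 1 := by
  have hd : (starWith v).degree j = #((starWith v).neighborFinset j) := rfl
  rw [hd]
  by_cases h : j = v
  · subst h
    rw [if_pos rfl]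
    have : (starWith j).neighborFinset j = univ.erase j := by
      ext w
      simp only [SimpleGraph.mem_neighborFinset, mem_erase, mem_univ, and_true]
      constructor
      · rintro ⟨h1, -⟩; exact Ne.symm h1
      · intro h1; exact ⟨Ne.symm h1, Or.inl rfl⟩
    rw [this, Finset.card_erase_of_mem (mem_univ j), Finset.card_univ, Fintype.card_fin]
  · rw [if_neg h]
    have : (starWith v).neighborFinset j = {v} := by
      ext w
      simp only [SimpleGraph.mem_neighborFinset, mem_singleton]
      constructor
      · rintro ⟨h1, h2 | h2⟩
        · exact absurd h2 h
        · exact h2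
      · rintro rfl; exact ⟨h, Or.inr rfl⟩
    rw [this, Finset.card_singleton]

lemma star_count (v j : Fin n) :
    #(univ.filter fun w => 1 < (starWith v).dist j w)
      = if j = v then 0 else n - 2 := by
  by_cases h : j = v
  · subst h
    rw [if_pos rfl]
    rw [Finset.card_eq_zero]
    apply Finset.filter_false_of_mem
    intro w _
    rw [star_dist_gt_one]
    rintro ⟨-, h1, -⟩
    exact h1 rfl
  · rw [if_neg h]
    have : (univ.filter fun w => 1 < (starWith v).dist j w)
        = (univ.erase j).erase v := by
      ext w
      simp only [mem_filter, mem_univ, true_and, mem_erase, and_true, star_dist_gt_one]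
      constructor
      · rintro ⟨h1, -, h3⟩; exact ⟨h3, Ne.symm h1⟩
      · rintro ⟨h1, h2⟩; exact ⟨Ne.symm h2, h, h1⟩
    rw [this, Finset.card_erase_of_mem (Finset.mem_erase.mpr ⟨Ne.symm h, mem_univ v⟩),
      Finset.card_erase_of_mem (mem_univ j), Finset.card_univ, Fintype.card_fin]
    omega

lemma star_welfare (hn : 3 ≤ n) (b : ℕ → ℝ) (c : ℝ) (hb : ∀ i, 2 ≤ i → b i = b 2)
    (v : Fin n) :
    socialWelfare b c (starWith v) =
      2 * ((n : ℝ) - 1) * (b 1 - c) + ((n : ℝ) - 1) * ((n : ℝ) - 2) * b 2 := by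
  rw [welfare_eq b c hb]
  have hdeg : (∑ j, (starWith v).degree j) = 2 * (n - 1) := by
    rw [← Finset.add_sum_erase _ _ (mem_univ v)]
    rw [Finset.sum_congr rfl (fun j hj => by
      rw [star_degree, if_neg (Finset.mem_erase.mp hj).1])]
    rw [star_degree, if_pos rfl, Finset.sum_const, Finset.card_erase_of_mem (mem_univ v),
      Finset.card_univ, Fintype.card_fin, smul_eq_mul, mul_one]
    omega
  have hcnt : (∑ j, #(univ.filter fun w => 1 < (starWith v).dist j w)) = (n - 1) * (n - 2) := by
    rw [← Finset.add_sum_erase _ _ (mem_univ v)]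
    rw [Finset.sum_congr rfl (fun j hj => by
      rw [star_count, if_neg (Finset.mem_erase.mp hj).1])]
    rw [star_count, if_pos rfl, Finset.sum_const, Finset.card_erase_of_mem (mem_univ v),
      Finset.card_univ, Fintype.card_fin, smul_eq_mul]
    exact zero_add _
  rw [hdeg, hcnt]
  have h1 : (1:ℕ) ≤ n := by omega
  have h2 : (2:ℕ) ≤ n := by omega
  push_cast [Nat.cast_sub h1, Nat.cast_sub h2]
  ring

end helpers

theorem stmt_5 (μ : ℕ) (hμ : 3 ≤ μ) (b : ℕ → ℝ) (c : ℝ)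
    (h12 : b 1 > b 2) (h2 : b 2 > 0) (hb : ∀ i, 2 ≤ i → b i = b 2)
    (hc1 : b 1 - b 2 < c) (hc2 : c ≤ b 1 + (((μ : ℝ) - 2) / 2) * b 2) :
    ∀ (v : Fin μ) (G : SimpleGraph (Fin μ)),
      socialWelfare b c G ≤ socialWelfare b c (starWith v) := by
  intro v G
  rw [welfare_eq b c hb, star_welfare hμ b c hb v]
  set m := #G.edgeFinset with hm
  set P := ∑ j : Fin μ, #(univ.filter fun w => 1 < G.dist j w) with hP
  have hdegsum : (∑ j, G.degree j) = 2 * m := G.sum_degrees_eq_twice_card_edges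
  have h4 : P + 2 * m ≤ μ * m := by
    have h := Finset.sum_le_sum (fun j (_ : j ∈ univ) => count_add_degree_le G j)
    rw [Finset.sum_add_distrib, hdegsum] at h
    simp only [Finset.sum_const, Finset.card_univ, Fintype.card_fin, smul_eq_mul, mul_one] at h
    rw [← hm, ← hP] at h
    omega
  have h5 : P + 2 * m + μ ≤ μ * μ := by
    have h := Finset.sum_le_sum (fun j (_ : j ∈ univ) => count_add_degree_add_one_le G j)
    rw [Finset.sum_add_distrib, Finset.sum_add_distrib, hdegsum] at h
    simp only [Finset.sum_const, Finset.card_univ, Fintype.card_fin, smul_eq_mul, mul_one] at h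
    rw [← hP] at h
    omega
  rw [hdegsum]
  have hμR : (3:ℝ) ≤ (μ:ℝ) := by exact_mod_cast hμ
  have h4R : (P:ℝ) + 2*(m:ℝ) ≤ (μ:ℝ) * (m:ℝ) := by exact_mod_cast h4
  have h5R : (P:ℝ) + 2*(m:ℝ) + (μ:ℝ) ≤ (μ:ℝ)*(μ:ℝ) := by exact_mod_cast h5
  push_cast
  rcases le_or_gt (m:ℝ) ((μ:ℝ)-1) with hcase | hcase
  · have hf1 : (0:ℝ) ≤ (μ:ℝ) - 1 - m := by linarith
    have hf2 : (0:ℝ) ≤ 2*(b 1 - c) + ((μ:ℝ)-2)*b 2 := by linarith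
    nlinarith [mul_nonneg hf1 hf2, mul_le_mul_of_nonneg_right
      (show (P:ℝ) ≤ (μ:ℝ)*(m:ℝ) - 2*(m:ℝ) by linarith) h2.le]
  · have hg1 : (0:ℝ) ≤ (m:ℝ) - ((μ:ℝ) - 1) := by linarith
    have hg2 : (0:ℝ) ≤ b 2 - (b 1 - c) := by linarith
    nlinarith [mul_nonneg hg1 hg2, mul_le_mul_of_nonneg_right
      (show (P:ℝ) ≤ (μ:ℝ)*(μ:ℝ) - 2*(m:ℝ) - (μ:ℝ) by linarith) h2.le]
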